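/- Let {a_i} be i.i.d. real random variables with E[exp(a_1)] = 1 (e.g., a_i = log(f_1(x_i)/f_0(x_i)) with x_i ~ f_0). Define the CUSUM recursion Z_0 = 0, Z_n = max{0, Z_{n−1} + a_n}, and T = inf{n ≥ 1 : Z_n ≥ h}. Then E[T] ≥ exp(h). -/

import Mathlib

open MeasureTheory ProbabilityTheory Real
open scoped ENNReal Classical

namespace Cusum12

noncomputable def Zf : ℕ → (ℕ → ℝ) → ℝ
  | 0, _ => 0
  | n + 1, x => max 0 (Zf n x + x (n + 1))

lemma measurable_Zf : ∀ n, Measurable (Zf n)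
  | 0 => measurable_const
  | n + 1 => measurable_const.max ((measurable_Zf n).add (measurable_pi_apply _))

lemma Zf_congr : ∀ (n : ℕ) (x y : ℕ → ℝ), (∀ i, 1 ≤ i → i ≤ n → x i = y i) → Zf n x = Zf n y
  | 0, _, _, _ => rfl
  | n + 1, x, y, hxy => by
    have h1 : Zf n x = Zf n y := Zf_congr n x y fun i hi1 hi2 => hxy i hi1 (hi2.trans n.le_succ)
    simp only [Zf, h1, hxy (n + 1) (by omega) le_rfl]

section
variable {Ω : Type*} [MeasurableSpace Ω] {μ : Measure Ω} {a : ℕ → Ω → ℝ}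

lemma indep_core (hmeas : ∀ i, Measurable (a i))
    (hindep : iIndepFun a μ)
    (n : ℕ) (φ : (ℕ → ℝ) → ℝ) (hφ : Measurable φ)
    (hdep : ∀ x y : ℕ → ℝ, (∀ i, 1 ≤ i → i ≤ n → x i = y i) → φ x = φ y) :
    IndepFun (fun ω => φ fun i => a i ω) (a (n + 1)) μ := by
  classical
  set S : Finset ℕ := Finset.Icc 1 n with hS
  have hST : Disjoint S ({n + 1} : Finset ℕ) := by
    simp only [hS, Finset.disjoint_singleton_right, Finset.mem_Icc]
    omega
  have base := hindep.indepFun_finset S {n + 1} hST hmeas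
  set ext : ({x // x ∈ S} → ℝ) → ℕ → ℝ :=
    fun v i => if hi : i ∈ S then v ⟨i, hi⟩ else 0 with hext_def
  have hext : Measurable ext := by
    apply measurable_pi_lambda
    intro i
    by_cases hi : i ∈ S
    · simpa only [hext_def, dif_pos hi] using measurable_pi_apply _
    · simpa only [hext_def, dif_neg hi] using measurable_const
  have hmem : (n + 1 : ℕ) ∈ ({n + 1} : Finset ℕ) := Finset.mem_singleton_self _
  have key := base.comp (φ := fun v => φ (ext v))
    (ψ := fun v : {x // x ∈ ({n + 1} : Finset ℕ)} → ℝ => v ⟨n + 1, hmem⟩)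
    (hφ.comp hext) (measurable_pi_apply (⟨n + 1, hmem⟩ : {x // x ∈ ({n + 1} : Finset ℕ)}) :
      Measurable fun v : {x // x ∈ ({n + 1} : Finset ℕ)} → ℝ => v ⟨n + 1, hmem⟩)
  have h1 : (fun v => φ (ext v)) ∘ (fun ω (i : S) => a (i : ℕ) ω)
      = fun ω => φ fun i => a i ω := by
    funext ω
    exact (hdep _ _ fun i hi1 hi2 => by
      simp [hext_def, hS, Finset.mem_Icc, hi1, hi2]).symm
  have h2 : (fun v : {x // x ∈ ({n + 1} : Finset ℕ)} → ℝ => v ⟨n + 1, hmem⟩)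
      ∘ (fun ω (i : ({n + 1} : Finset ℕ)) => a (i : ℕ) ω) = a (n + 1) := rfl
  rw [h1, h2] at key
  exact key

end

variable {Ω : Type*}

def Bset (Z : ℕ → Ω → ℝ) (h : ℝ) (n : ℕ) : Set Ω := {ω | ∃ k, 1 ≤ k ∧ k ≤ n ∧ h ≤ Z k ω}

noncomputable def Tst (Z : ℕ → Ω → ℝ) (h : ℝ) (n : ℕ) (ω : Ω) : ℕ :=
  Nat.find (p := fun k => k = n ∨ (1 ≤ k ∧ k ≤ n ∧ h ≤ Z k ω)) ⟨n, Or.inl rfl⟩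

variable {Z : ℕ → Ω → ℝ} {h : ℝ} {n : ℕ} {ω : Ω}

lemma Tst_spec : Tst Z h n ω = n ∨
    (1 ≤ Tst Z h n ω ∧ Tst Z h n ω ≤ n ∧ h ≤ Z (Tst Z h n ω) ω) :=
  Nat.find_spec (p := fun k => k = n ∨ (1 ≤ k ∧ k ≤ n ∧ h ≤ Z k ω)) ⟨n, Or.inl rfl⟩

lemma Tst_min' {k : ℕ} (hk : k = n ∨ (1 ≤ k ∧ k ≤ n ∧ h ≤ Z k ω)) : Tst Z h n ω ≤ k :=
  Nat.find_min' _ hk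

lemma Tst_le : Tst Z h n ω ≤ n := Tst_min' (Or.inl rfl)

lemma Tst_hit (hB : ω ∈ Bset Z h n) :
    1 ≤ Tst Z h n ω ∧ h ≤ Z (Tst Z h n ω) ω := by
  obtain ⟨k, hk1, hkn, hkh⟩ := hB
  have hle : Tst Z h n ω ≤ k := Tst_min' (Or.inr ⟨hk1, hkn, hkh⟩)
  rcases Tst_spec (Z := Z) (h := h) (n := n) (ω := ω) with hTn | hT
  · have hk : Tst Z h n ω = k := le_antisymm hle (by omega)
    rw [hk]; exact ⟨hk1, hkh⟩
  · exact ⟨hT.1, hT.2.2⟩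

lemma Tst_notmem (hB : ω ∉ Bset Z h n) : Tst Z h n ω = n := by
  rcases Tst_spec (Z := Z) (h := h) (n := n) (ω := ω) with h1 | h2
  · exact h1
  · exact absurd ⟨_, h2⟩ hB

lemma Bset_mono {m : ℕ} (hmn : m ≤ n) : Bset Z h m ⊆ Bset Z h n :=
  fun _ ⟨k, h1, h2, h3⟩ => ⟨k, h1, h2.trans hmn, h3⟩

lemma Tst_succ_of_mem (hB : ω ∈ Bset Z h n) : Tst Z h (n + 1) ω = Tst Z h n ω := by
  obtain ⟨h1, h2⟩ := Tst_hit hB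
  apply le_antisymm
  · exact Tst_min' (Or.inr ⟨h1, Tst_le.trans n.le_succ, h2⟩)
  · obtain ⟨g1, g2⟩ := Tst_hit (Bset_mono n.le_succ hB)
    obtain ⟨k, hk1, hkn, hkh⟩ := hB
    have hle : Tst Z h (n + 1) ω ≤ k := Tst_min' (Or.inr ⟨hk1, by omega, hkh⟩)
    exact Tst_min' (Or.inr ⟨g1, by omega, g2⟩)

lemma Tst_succ_of_not (hB : ω ∉ Bset Z h n) : Tst Z h (n + 1) ω = n + 1 := by
  rcases Tst_spec (Z := Z) (h := h) (n := n + 1) (ω := ω) with h1 | h2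
  · exact h1
  · obtain ⟨g1, g2, g3⟩ := h2
    rcases Nat.lt_or_ge (Tst Z h (n + 1) ω) (n + 1) with hlt | hge
    · exact absurd ⟨_, g1, by omega, g3⟩ hB
    · omega

lemma Tst_mono_succ : Tst Z h n ω ≤ Tst Z h (n + 1) ω := by
  by_cases hB : ω ∈ Bset Z h n
  · rw [Tst_succ_of_mem hB]
  · rw [Tst_succ_of_not hB, Tst_notmem hB]; omega

lemma Tst_zero : Tst Z h 0 ω = 0 := Nat.le_zero.mp Tst_le

lemma measurable_Tst [MeasurableSpace Ω] (hZ : ∀ k, Measurable (Z k)) (n : ℕ) :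
    Measurable (Tst Z h n) := by
  apply measurable_find
  intro k
  have : {ω | k = n ∨ (1 ≤ k ∧ k ≤ n ∧ h ≤ Z k ω)}
      = {ω : Ω | k = n} ∪ ({ω : Ω | 1 ≤ k ∧ k ≤ n} ∩ {ω | h ≤ Z k ω}) := by
    ext ω; simp [and_assoc]
  rw [this]
  exact (MeasurableSet.const _).union
    ((MeasurableSet.const _).inter (measurableSet_le measurable_const (hZ k)))

end Cusum12

open Cusum12

/-- CUSUM false-alarm bound: if the i.i.d. increments satisfy `E[exp(a₁)] = 1`
(e.g. log-likelihood ratios under the pre-change law), then the CUSUM stopping time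
`T = inf{n ≥ 1 : Z_n ≥ h}` satisfies `E[T] ≥ exp(h)`. -/
theorem stmt12 {Ω : Type*} [MeasurableSpace Ω] (μ : Measure Ω) [IsProbabilityMeasure μ]
    (a : ℕ → Ω → ℝ) (hmeas : ∀ i, Measurable (a i))
    (hindep : iIndepFun a μ)
    (hident : ∀ i, IdentDistrib (a i) (a 1) μ μ)
    (hexp : Integrable (fun ω => Real.exp (a 1 ω)) μ)
    (hM : ∫ ω, Real.exp (a 1 ω) ∂μ = 1)
    (Z : ℕ → Ω → ℝ) (hZ0 : ∀ ω, Z 0 ω = 0)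
    (hZrec : ∀ n ω, Z (n + 1) ω = max 0 (Z n ω + a (n + 1) ω))
    (h : ℝ) (hh : 0 ≤ h) :
    ENNReal.ofReal (Real.exp h)
      ≤ ∫⁻ ω, sInf {t : ℝ≥0∞ | ∃ n : ℕ, 1 ≤ n ∧ t = n ∧ h ≤ Z n ω} ∂μ := by
  classical
  have hZnn : ∀ n ω, 0 ≤ Z n ω := by
    intro n ω
    cases n with
    | zero => exact (hZ0 ω).ge
    | succ n => rw [hZrec]; exact le_max_left _ _
  rcases eq_or_lt_of_le hh with hzero | hpos
  · -- trivial case h = 0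
    subst hzero
    have hint : ∀ ω : Ω,
        sInf {t : ℝ≥0∞ | ∃ n : ℕ, 1 ≤ n ∧ t = n ∧ (0:ℝ) ≤ Z n ω} = 1 := by
      intro ω
      apply le_antisymm
      · exact sInf_le ⟨1, le_rfl, by norm_num, hZnn 1 ω⟩
      · apply le_sInf
        rintro t ⟨n, hn1, rfl, -⟩
        exact_mod_cast Nat.one_le_cast.mpr hn1
    calc ENNReal.ofReal (Real.exp 0) = 1 := by simp
      _ = ∫⁻ _, 1 ∂μ := by simp
      _ ≤ _ := le_of_eq (lintegral_congr fun ω => (hint ω).symm)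
  -- main case 0 < h
  have hZmeas : ∀ n, Measurable (Z n) := by
    intro n
    induction n with
    | zero =>
        have e : Z 0 = fun _ => (0:ℝ) := funext hZ0
        rw [e]; exact measurable_const
    | succ n ih =>
        have e : Z (n + 1) = fun ω => max 0 (Z n ω + a (n + 1) ω) := funext (hZrec n)
        rw [e]; exact measurable_const.max (ih.add (hmeas _))
  have hZeq : ∀ n ω, Z n ω = Zf n fun i => a i ω := by
    intro n
    induction n with
    | zero => intro ω; rw [hZ0]; rfl
    | succ n ih => intro ω; rw [hZrec, ih ω]; rfl
  have hexpa : ∀ i, Integrable (fun ω => Real.exp (a i ω)) μ :=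
    fun i => ((hident i).comp measurable_exp).integrable_iff.mpr hexp
  have hinta : ∀ i, ∫ ω, Real.exp (a i ω) ∂μ = 1 :=
    fun i => ((hident i).comp measurable_exp).integral_eq.trans hM
  have hindZ : ∀ n, IndepFun (fun ω => Real.exp (Z n ω))
      (fun ω => Real.exp (a (n + 1) ω)) μ := by
    intro n
    have h1 := indep_core hmeas hindep n (fun x => Real.exp (Zf n x))
      (measurable_exp.comp (measurable_Zf n))
      (fun x y hxy => by rw [Zf_congr n x y hxy])
    have h2 := h1.comp measurable_id measurable_exp
    have e1 : (id ∘ fun ω => Real.exp (Zf n fun i => a i ω))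
        = fun ω => Real.exp (Z n ω) := by
      funext ω; simp [Function.comp, hZeq n ω]
    have e2 : (Real.exp ∘ a (n + 1)) = fun ω => Real.exp (a (n + 1) ω) := rfl
    rw [e1, e2] at h2
    exact h2
  have hIexpZ : ∀ n, Integrable (fun ω => Real.exp (Z n ω)) μ := by
    intro n
    induction n with
    | zero =>
        have e : (fun ω => Real.exp (Z 0 ω)) = fun _ => (1:ℝ) := by
          funext ω; rw [hZ0, Real.exp_zero]
        rw [e]; exact integrable_const 1
    | succ n ih =>
        have hprod : Integrable (fun ω => Real.exp (Z n ω) * Real.exp (a (n + 1) ω)) μ :=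
          (hindZ n).integrable_mul ih (hexpa (n + 1))
        refine ((integrable_const (1:ℝ)).add hprod).mono'
          ((measurable_exp.comp (hZmeas (n + 1))).aestronglyMeasurable) ?_
        filter_upwards with ω
        rw [Real.norm_eq_abs, abs_of_pos (Real.exp_pos _), hZrec]
        rcases le_total (Z n ω + a (n + 1) ω) 0 with hs | hs
        · rw [max_eq_left hs, Real.exp_zero]
          simp only [Pi.add_apply]
          nlinarith [Real.exp_pos (Z n ω), Real.exp_pos (a (n + 1) ω)]
        · rw [max_eq_right hs, Real.exp_add]
          simp only [Pi.add_apply]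
          nlinarith [Real.exp_pos (Z n ω), Real.exp_pos (a (n + 1) ω)]
  have hTmeas : ∀ n, Measurable (Tst Z h n) := fun n => measurable_Tst hZmeas n
  have hBmeas : ∀ n, MeasurableSet (Bset Z h n) := by
    intro n
    have e : Bset Z h n = ⋃ k ∈ Finset.Icc 1 n, {ω | h ≤ Z k ω} := by
      ext ω; simp [Bset, Finset.mem_Icc, and_assoc]
    rw [e]
    exact (Finset.Icc 1 n).measurableSet_biUnion
      fun k _ => measurableSet_le measurable_const (hZmeas k)
  have hYmeas : ∀ n, Measurable fun ω => Real.exp (Z (Tst Z h n ω) ω) := by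
    intro n
    have hrepr : (fun ω => Real.exp (Z (Tst Z h n ω) ω))
        = fun ω => ∑ k ∈ Finset.range (n + 1),
            if Tst Z h n ω = k then Real.exp (Z k ω) else 0 := by
      funext ω
      rw [Finset.sum_ite_eq (Finset.range (n + 1)) (Tst Z h n ω)
        (fun k => Real.exp (Z k ω))]
      rw [if_pos (Finset.mem_range.mpr (Nat.lt_succ_of_le Tst_le))]
    rw [hrepr]
    exact Finset.measurable_sum _ fun k _ =>
      Measurable.ite ((hTmeas n) (measurableSet_singleton k))
        (measurable_exp.comp (hZmeas k)) measurable_const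
  have hYint : ∀ n, Integrable (fun ω => Real.exp (Z (Tst Z h n ω) ω)) μ := by
    intro n
    refine (integrable_finset_sum (Finset.range (n + 1))
      fun k _ => hIexpZ k).mono' (hYmeas n).aestronglyMeasurable ?_
    filter_upwards with ω
    rw [Real.norm_eq_abs, abs_of_pos (Real.exp_pos _)]
    exact Finset.single_le_sum (f := fun k => Real.exp (Z k ω))
      (fun k _ => (Real.exp_pos _).le) (Finset.mem_range.mpr (Nat.lt_succ_of_le Tst_le))
  have hRmeas : ∀ n, Measurable fun ω => ∑ k ∈ Finset.Icc 1 n,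
      if k ≤ Tst Z h n ω ∧ Z k ω = 0 then (1:ℝ) else 0 := by
    intro n
    apply Finset.measurable_sum
    intro k _
    refine Measurable.ite ?_ measurable_const measurable_const
    exact ((hTmeas n) (MeasurableSpace.measurableSet_top)).inter
      ((hZmeas k) (measurableSet_singleton 0))
  have hRint : ∀ n, Integrable (fun ω => ∑ k ∈ Finset.Icc 1 n,
      if k ≤ Tst Z h n ω ∧ Z k ω = 0 then (1:ℝ) else 0) μ := by
    intro n
    apply integrable_finset_sum
    intro k hk
    refine (integrable_const (1:ℝ)).mono' ?_ ?_
    · refine (Measurable.ite ?_ measurable_const measurable_const).aestronglyMeasurable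
      exact ((hTmeas n) (MeasurableSpace.measurableSet_top)).inter
        ((hZmeas k) (measurableSet_singleton 0))
    · filter_upwards with ω
      split <;> simp
  have hTint : ∀ n, Integrable (fun ω => (Tst Z h n ω : ℝ)) μ := by
    intro n
    refine (integrable_const (n:ℝ)).mono'
      ((measurable_from_top.comp (hTmeas n)).aestronglyMeasurable) ?_
    filter_upwards with ω
    rw [Real.norm_eq_abs, abs_of_nonneg (Nat.cast_nonneg _)]
    exact Nat.cast_le.mpr Tst_le
  -- independence of the indicator-weighted statistic and the next increment
  have hindI : ∀ n, IndepFun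
      (fun ω => ((Bset Z h n)ᶜ).indicator (fun ω' => Real.exp (Z n ω')) ω)
      (fun ω => Real.exp (a (n + 1) ω)) μ := by
    intro n
    set φ : (ℕ → ℝ) → ℝ := fun x =>
      if ∀ k, 1 ≤ k → k ≤ n → Zf k x < h then Real.exp (Zf n x) else 0 with hφdef
    have hφm : Measurable φ := by
      refine Measurable.ite ?_ (measurable_exp.comp (measurable_Zf n)) measurable_const
      have e : {x : ℕ → ℝ | ∀ k, 1 ≤ k → k ≤ n → Zf k x < h}
          = ⋂ k, ⋂ (_ : 1 ≤ k), ⋂ (_ : k ≤ n), {x | Zf k x < h} := by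
        ext x; simp
      rw [e]
      exact MeasurableSet.iInter fun k => MeasurableSet.iInter fun _ =>
        MeasurableSet.iInter fun _ => measurableSet_lt (measurable_Zf k) measurable_const
    have hφdep : ∀ x y : ℕ → ℝ, (∀ i, 1 ≤ i → i ≤ n → x i = y i) → φ x = φ y := by
      intro x y hxy
      have hZk : ∀ k, 1 ≤ k → k ≤ n → Zf k x = Zf k y := fun k h1 h2 =>
        Zf_congr k x y fun i u1 u2 => hxy i u1 (u2.trans h2)
      have hcond : (∀ k, 1 ≤ k → k ≤ n → Zf k x < h)
          ↔ (∀ k, 1 ≤ k → k ≤ n → Zf k y < h) := by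
        constructor <;> intro H k u1 u2
        · rw [← hZk k u1 u2]; exact H k u1 u2
        · rw [hZk k u1 u2]; exact H k u1 u2
      by_cases hc : ∀ k, 1 ≤ k → k ≤ n → Zf k x < h
      · rw [hφdef]; dsimp only
        rw [if_pos hc, if_pos (hcond.mp hc), Zf_congr n x y hxy]
      · rw [hφdef]; dsimp only
        rw [if_neg hc, if_neg fun hy => hc (hcond.mpr hy)]
    have hcore := indep_core hmeas hindep n φ hφm hφdep
    have hcomp := hcore.comp measurable_id measurable_exp
    have e1 : (id ∘ fun ω => φ fun i => a i ω)
        = fun ω => ((Bset Z h n)ᶜ).indicator (fun ω' => Real.exp (Z n ω')) ω := by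
      funext ω
      simp only [Function.comp, id_eq, hφdef]
      by_cases hω : ω ∈ Bset Z h n
      · have hc : ¬ ∀ k, 1 ≤ k → k ≤ n → Zf k (fun i => a i ω) < h := by
          push_neg
          obtain ⟨k, u1, u2, u3⟩ := hω
          exact ⟨k, u1, u2, by rw [← hZeq k ω]; exact u3⟩
        rw [if_neg hc, Set.indicator_of_notMem (by simp [hω])]
      · have hc : ∀ k, 1 ≤ k → k ≤ n → Zf k (fun i => a i ω) < h := by
          intro k u1 u2
          rw [← hZeq k ω]
          by_contra hcon
          exact hω ⟨k, u1, u2, not_lt.mp hcon⟩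
        rw [if_pos hc, Set.indicator_of_mem (Set.mem_compl hω), hZeq n ω]
    have e2 : (Real.exp ∘ a (n + 1)) = fun ω => Real.exp (a (n + 1) ω) := rfl
    rw [e1, e2] at hcomp
    exact hcomp
  -- key supermartingale-type induction
  have key : ∀ n, ∫ ω, Real.exp (Z (Tst Z h n ω) ω) ∂μ
      ≤ 1 + ∫ ω, (∑ k ∈ Finset.Icc 1 n,
          if k ≤ Tst Z h n ω ∧ Z k ω = 0 then (1:ℝ) else 0) ∂μ := by
    intro n
    induction n with
    | zero =>
        have e1 : (fun ω => Real.exp (Z (Tst Z h 0 ω) ω)) = fun _ => (1:ℝ) := by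
          funext ω; rw [Tst_zero, hZ0, Real.exp_zero]
        have e2 : (fun ω : Ω => ∑ k ∈ Finset.Icc 1 0,
            if k ≤ Tst Z h 0 ω ∧ Z k ω = 0 then (1:ℝ) else 0) = fun _ => (0:ℝ) := by
          funext ω; simp
        rw [e1, e2]; simp
    | succ n ih =>
        set B := Bset Z h n with hBdef
        set f1 : Ω → ℝ := B.indicator (fun ω => Real.exp (Z (Tst Z h n ω) ω)) with hf1
        set f2 : Ω → ℝ := Bᶜ.indicator
          (fun ω => Real.exp (Z n ω) * Real.exp (a (n + 1) ω)) with hf2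
        set f3 : Ω → ℝ := (Bᶜ ∩ {ω | Z (n + 1) ω = 0}).indicator
          (fun _ => (1:ℝ)) with hf3
        have hint1 : Integrable f1 μ := (hYint n).indicator (hBmeas n)
        have hint2 : Integrable f2 μ :=
          ((hindZ n).integrable_mul (hIexpZ n) (hexpa (n + 1))).indicator (hBmeas n).compl
        have hmZ0 : MeasurableSet {ω | Z (n + 1) ω = 0} :=
          (hZmeas (n + 1)) (measurableSet_singleton 0)
        have hint3 : Integrable f3 μ :=
          (integrable_const 1).indicator ((hBmeas n).compl.inter hmZ0)
        have hpt : ∀ ω, Real.exp (Z (Tst Z h (n + 1) ω) ω) ≤ f1 ω + f2 ω + f3 ω := by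
          intro ω
          by_cases hBm : ω ∈ B
          · rw [Tst_succ_of_mem hBm]
            have e2 : f2 ω = 0 := Set.indicator_of_notMem (by simp [hBm]) _
            have e3 : f3 ω = 0 := Set.indicator_of_notMem (by simp [hBm]) _
            have e1 : f1 ω = Real.exp (Z (Tst Z h n ω) ω) := Set.indicator_of_mem hBm _
            rw [e1, e2, e3, add_zero, add_zero]
          · have hTs : Tst Z h (n + 1) ω = n + 1 := Tst_succ_of_not hBm
            have e1 : f1 ω = 0 := Set.indicator_of_notMem hBm _
            rw [hTs, e1, zero_add]
            rcases le_total (Z n ω + a (n + 1) ω) 0 with hs | hs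
            · have hz : Z (n + 1) ω = 0 := by rw [hZrec]; exact max_eq_left hs
              have e3 : f3 ω = 1 := Set.indicator_of_mem (Set.mem_inter (Set.mem_compl hBm) hz) _
              have e2 : 0 ≤ f2 ω := Set.indicator_nonneg (fun ω' _ => by positivity) ω
              rw [hz, e3, Real.exp_zero]
              linarith
            · have hz : Z (n + 1) ω = Z n ω + a (n + 1) ω := by
                rw [hZrec]; exact max_eq_right hs
              have e2 : f2 ω = Real.exp (Z n ω) * Real.exp (a (n + 1) ω) :=
                Set.indicator_of_mem (Set.mem_compl hBm) _
              have e3 : 0 ≤ f3 ω := Set.indicator_nonneg (fun _ _ => zero_le_one) ω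
              rw [hz, Real.exp_add, e2]
              linarith
        have step1 : ∫ ω, Real.exp (Z (Tst Z h (n + 1) ω) ω) ∂μ
            ≤ ∫ ω, (f1 ω + f2 ω + f3 ω) ∂μ :=
          integral_mono (hYint (n + 1)) ((hint1.add hint2).add hint3) hpt
        have step2 : ∫ ω, (f1 ω + f2 ω + f3 ω) ∂μ
            = ∫ ω, f1 ω ∂μ + ∫ ω, f2 ω ∂μ + ∫ ω, f3 ω ∂μ := by
          have e1 : ∫ ω, ((f1 + f2) ω + f3 ω) ∂μ
              = ∫ ω, (f1 + f2) ω ∂μ + ∫ ω, f3 ω ∂μ := integral_add (hint1.add hint2) hint3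
          have e2 : ∫ ω, (f1 ω + f2 ω) ∂μ = ∫ ω, f1 ω ∂μ + ∫ ω, f2 ω ∂μ :=
            integral_add hint1 hint2
          simp only [Pi.add_apply] at e1
          rw [e1, e2]
        have hsplit : f2 = fun ω =>
            (Bᶜ.indicator (fun ω' => Real.exp (Z n ω')) ω) * Real.exp (a (n + 1) ω) := by
          funext ω
          by_cases hω : ω ∈ Bᶜ <;> simp [hf2, Set.indicator, hω]
        have hI2 : ∫ ω, f2 ω ∂μ = ∫ ω, Bᶜ.indicator (fun ω' => Real.exp (Z n ω')) ω ∂μ := by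
          have e := (hindI n).integral_fun_mul_eq_mul_integral
            ((hIexpZ n).aestronglyMeasurable.indicator (hBmeas n).compl)
            (hexpa (n + 1)).aestronglyMeasurable
          simp only [hsplit]
          calc ∫ ω, Bᶜ.indicator (fun ω' => Real.exp (Z n ω')) ω * Real.exp (a (n + 1) ω) ∂μ
              = (∫ ω, Bᶜ.indicator (fun ω' => Real.exp (Z n ω')) ω ∂μ)
                * ∫ ω, Real.exp (a (n + 1) ω) ∂μ := e
            _ = ∫ ω, Bᶜ.indicator (fun ω' => Real.exp (Z n ω')) ω ∂μ := by
                rw [hinta (n + 1), mul_one]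
        have hI2' : ∫ ω, Bᶜ.indicator (fun ω' => Real.exp (Z n ω')) ω ∂μ
            = ∫ ω, Bᶜ.indicator (fun ω' => Real.exp (Z (Tst Z h n ω') ω')) ω ∂μ := by
          have e : Bᶜ.indicator (fun ω' => Real.exp (Z n ω'))
              = Bᶜ.indicator (fun ω' => Real.exp (Z (Tst Z h n ω') ω')) := by
            funext ω
            by_cases hω : ω ∈ Bᶜ
            · rw [Set.indicator_of_mem hω, Set.indicator_of_mem hω, Tst_notmem hω]
            · rw [Set.indicator_of_notMem hω, Set.indicator_of_notMem hω]
          rw [e]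
        have hcompl : ∫ ω, f1 ω ∂μ
              + ∫ ω, Bᶜ.indicator (fun ω' => Real.exp (Z (Tst Z h n ω') ω')) ω ∂μ
            = ∫ ω, Real.exp (Z (Tst Z h n ω) ω) ∂μ := by
          rw [hf1, integral_indicator (hBmeas n), integral_indicator (hBmeas n).compl]
          exact integral_add_compl (hBmeas n) (hYint n)
        have hRpt : ∀ ω, (∑ k ∈ Finset.Icc 1 n,
              if k ≤ Tst Z h n ω ∧ Z k ω = 0 then (1:ℝ) else 0) + f3 ω
            ≤ ∑ k ∈ Finset.Icc 1 (n + 1),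
              if k ≤ Tst Z h (n + 1) ω ∧ Z k ω = 0 then (1:ℝ) else 0 := by
          intro ω
          rw [Finset.sum_Icc_succ_top (by omega : 1 ≤ n + 1)]
          have hterm : ∀ k ∈ Finset.Icc 1 n,
              (if k ≤ Tst Z h n ω ∧ Z k ω = 0 then (1:ℝ) else 0)
              ≤ if k ≤ Tst Z h (n + 1) ω ∧ Z k ω = 0 then (1:ℝ) else 0 := by
            intro k _
            by_cases hc : k ≤ Tst Z h n ω ∧ Z k ω = 0
            · rw [if_pos hc, if_pos ⟨hc.1.trans Tst_mono_succ, hc.2⟩]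
            · rw [if_neg hc]; split <;> norm_num
          have hlast : f3 ω ≤ if n + 1 ≤ Tst Z h (n + 1) ω ∧ Z (n + 1) ω = 0
              then (1:ℝ) else 0 := by
            by_cases hm : ω ∈ Bᶜ ∩ {ω' | Z (n + 1) ω' = 0}
            · have e : f3 ω = 1 := Set.indicator_of_mem hm _
              rw [e, if_pos ⟨le_of_eq (Tst_succ_of_not hm.1).symm, hm.2⟩]
            · have e : f3 ω = 0 := Set.indicator_of_notMem hm _
              rw [e]; split <;> norm_num
          exact add_le_add (Finset.sum_le_sum hterm) hlast
        have step3 : ∫ ω, f3 ω ∂μ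
            ≤ ∫ ω, (∑ k ∈ Finset.Icc 1 (n + 1),
                if k ≤ Tst Z h (n + 1) ω ∧ Z k ω = 0 then (1:ℝ) else 0) ∂μ
              - ∫ ω, (∑ k ∈ Finset.Icc 1 n,
                if k ≤ Tst Z h n ω ∧ Z k ω = 0 then (1:ℝ) else 0) ∂μ := by
          have hsum := integral_add (hRint n) hint3
          have hmono := integral_mono ((hRint n).add hint3) (hRint (n + 1)) hRpt
          simp only [Pi.add_apply] at hmono
          rw [hsum] at hmono
          linarith
        calc ∫ ω, Real.exp (Z (Tst Z h (n + 1) ω) ω) ∂μ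
            ≤ ∫ ω, f1 ω ∂μ + ∫ ω, f2 ω ∂μ + ∫ ω, f3 ω ∂μ := step1.trans (le_of_eq step2)
          _ = ∫ ω, Real.exp (Z (Tst Z h n ω) ω) ∂μ + ∫ ω, f3 ω ∂μ := by
              rw [hI2, hI2']
              rw [← hcompl]
          _ ≤ 1 + ∫ ω, (∑ k ∈ Finset.Icc 1 (n + 1),
                if k ≤ Tst Z h (n + 1) ω ∧ Z k ω = 0 then (1:ℝ) else 0) ∂μ := by
              linarith [ih, step3]
  -- lower bound on the stopped exponential
  have hlowY : ∀ n, 1 + (Real.exp h - 1) * (μ (Bset Z h n)).toReal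
      ≤ ∫ ω, Real.exp (Z (Tst Z h n ω) ω) ∂μ := by
    intro n
    have hIind : Integrable ((Bset Z h n).indicator fun _ => Real.exp h - 1) μ :=
      (integrable_const _).indicator (hBmeas n)
    have hptY : ∀ ω, (1:ℝ) + (Bset Z h n).indicator (fun _ => Real.exp h - 1) ω
        ≤ Real.exp (Z (Tst Z h n ω) ω) := by
      intro ω
      by_cases hω : ω ∈ Bset Z h n
      · rw [Set.indicator_of_mem hω]
        have h2 : Real.exp h ≤ Real.exp (Z (Tst Z h n ω) ω) :=
          Real.exp_le_exp.mpr (Tst_hit hω).2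
        linarith
      · rw [Set.indicator_of_notMem hω]
        have h2 : (1:ℝ) ≤ Real.exp (Z (Tst Z h n ω) ω) :=
          Real.one_le_exp (hZnn _ ω)
        linarith
    have hmono := integral_mono ((integrable_const 1).add hIind) (hYint n) hptY
    have hadd := integral_add (integrable_const (1:ℝ)) hIind
    simp only [Pi.add_apply] at hmono
    rw [hadd] at hmono
    rw [integral_const, integral_indicator_const _ (hBmeas n)] at hmono
    simp only [Measure.real, measure_univ, ENNReal.toReal_one, smul_eq_mul, one_mul, one_smul] at hmono
    linarith [hmono]
  -- upper bound on the reset count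
  have hupR : ∀ n, ∫ ω, (∑ k ∈ Finset.Icc 1 n,
        if k ≤ Tst Z h n ω ∧ Z k ω = 0 then (1:ℝ) else 0) ∂μ
      ≤ ∫ ω, (Tst Z h n ω : ℝ) ∂μ - (μ (Bset Z h n)).toReal := by
    intro n
    have hIind : Integrable ((Bset Z h n).indicator fun _ => (1:ℝ)) μ :=
      (integrable_const _).indicator (hBmeas n)
    have hptR : ∀ ω, (∑ k ∈ Finset.Icc 1 n,
          if k ≤ Tst Z h n ω ∧ Z k ω = 0 then (1:ℝ) else 0)
        ≤ (Tst Z h n ω : ℝ) - (Bset Z h n).indicator (fun _ => (1:ℝ)) ω := by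
      intro ω
      by_cases hω : ω ∈ Bset Z h n
      · obtain ⟨h1, h2⟩ := Tst_hit hω
        rw [Set.indicator_of_mem hω]
        have hsub : ∀ k ∈ Finset.Icc 1 n,
            (if k ≤ Tst Z h n ω ∧ Z k ω = 0 then (1:ℝ) else 0)
            ≤ if k ∈ Finset.Icc 1 (Tst Z h n ω - 1) then (1:ℝ) else 0 := by
          intro k hk
          by_cases hc : k ≤ Tst Z h n ω ∧ Z k ω = 0
          · have hne : k ≠ Tst Z h n ω := by
              intro he
              rw [he] at hc
              linarith [hc.2, h2, hpos]
            rw [if_pos hc, if_pos]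
            rw [Finset.mem_Icc] at hk ⊢
            omega
          · rw [if_neg hc]; split <;> norm_num
        calc (∑ k ∈ Finset.Icc 1 n, if k ≤ Tst Z h n ω ∧ Z k ω = 0 then (1:ℝ) else 0)
            ≤ ∑ k ∈ Finset.Icc 1 n,
                if k ∈ Finset.Icc 1 (Tst Z h n ω - 1) then (1:ℝ) else 0 :=
              Finset.sum_le_sum hsub
          _ = ∑ k ∈ Finset.Icc 1 n ∩ Finset.Icc 1 (Tst Z h n ω - 1), (1:ℝ) :=
              (Finset.sum_ite_mem _ _ _)
          _ ≤ ∑ k ∈ Finset.Icc 1 (Tst Z h n ω - 1), (1:ℝ) := by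
              apply Finset.sum_le_sum_of_subset_of_nonneg (Finset.inter_subset_right)
              intros; norm_num
          _ = ((Tst Z h n ω - 1 : ℕ) : ℝ) := by
              rw [Finset.sum_const, Nat.card_Icc]
              simp
          _ = (Tst Z h n ω : ℝ) - 1 := by
              rw [Nat.cast_sub h1, Nat.cast_one]
      · rw [Set.indicator_of_notMem hω, sub_zero]
        calc (∑ k ∈ Finset.Icc 1 n, if k ≤ Tst Z h n ω ∧ Z k ω = 0 then (1:ℝ) else 0)
            ≤ ∑ _k ∈ Finset.Icc 1 n, (1:ℝ) :=
              Finset.sum_le_sum (fun k _ => by split <;> norm_num)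
          _ = (n : ℝ) := by rw [Finset.sum_const, Nat.card_Icc]; simp
          _ = (Tst Z h n ω : ℝ) := by rw [Tst_notmem hω]
    have hmono := integral_mono (hRint n) ((hTint n).sub hIind) hptR
    have hsub := integral_sub (hTint n) hIind
    simp only [Pi.sub_apply] at hmono
    rw [hsub] at hmono
    rw [integral_indicator_const _ (hBmeas n)] at hmono
    simpa [Measure.real] using hmono
  -- per-horizon expected-value bound
  have hbound : ∀ n, Real.exp h * (μ (Bset Z h n)).toReal
      ≤ ∫ ω, (Tst Z h n ω : ℝ) ∂μ := by
    intro n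
    have k1 := key n
    have k2 := hlowY n
    have k3 := hupR n
    linarith
  -- pass to the lower integral of the stopping time
  have hTge : ∀ (n : ℕ) (ω : Ω), (Tst Z h n ω : ℝ≥0∞)
      ≤ sInf {t : ℝ≥0∞ | ∃ m : ℕ, 1 ≤ m ∧ t = m ∧ h ≤ Z m ω} := by
    intro n ω
    apply le_sInf
    rintro t ⟨m, hm1, rfl, hmh⟩
    have : Tst Z h n ω ≤ m := by
      rcases le_or_gt m n with hmn | hmn
      · exact Tst_min' (Or.inr ⟨hm1, hmn, hmh⟩)
      · exact Tst_le.trans hmn.le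
    exact_mod_cast this
  have hlint : ∀ n, ENNReal.ofReal (Real.exp h) * μ (Bset Z h n)
      ≤ ∫⁻ ω, sInf {t : ℝ≥0∞ | ∃ m : ℕ, 1 ≤ m ∧ t = m ∧ h ≤ Z m ω} ∂μ := by
    intro n
    have h1 : ∫⁻ ω, (Tst Z h n ω : ℝ≥0∞) ∂μ
        ≤ ∫⁻ ω, sInf {t : ℝ≥0∞ | ∃ m : ℕ, 1 ≤ m ∧ t = m ∧ h ≤ Z m ω} ∂μ :=
      lintegral_mono fun ω => hTge n ω
    have h2 : ENNReal.ofReal (∫ ω, (Tst Z h n ω : ℝ) ∂μ)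
        = ∫⁻ ω, (Tst Z h n ω : ℝ≥0∞) ∂μ := by
      rw [MeasureTheory.ofReal_integral_eq_lintegral_ofReal (hTint n)
        (Filter.Eventually.of_forall fun ω => Nat.cast_nonneg _)]
      exact lintegral_congr fun ω => ENNReal.ofReal_natCast _
    calc ENNReal.ofReal (Real.exp h) * μ (Bset Z h n)
        = ENNReal.ofReal (Real.exp h * (μ (Bset Z h n)).toReal) := by
          rw [ENNReal.ofReal_mul (Real.exp_pos h).le,
            ENNReal.ofReal_toReal (measure_ne_top μ _)]
      _ ≤ ENNReal.ofReal (∫ ω, (Tst Z h n ω : ℝ) ∂μ) :=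
          ENNReal.ofReal_le_ofReal (hbound n)
      _ = ∫⁻ ω, (Tst Z h n ω : ℝ≥0∞) ∂μ := h2
      _ ≤ _ := h1
  have hUmeas : MeasurableSet (⋃ n, Bset Z h n) := MeasurableSet.iUnion hBmeas
  have hMon : Monotone fun n => Bset Z h n := fun i j hij => Bset_mono hij
  have hUsup : μ (⋃ n, Bset Z h n) = ⨆ n, μ (Bset Z h n) :=
    hMon.directed_le.measure_iUnion
  have hfinal1 : ENNReal.ofReal (Real.exp h) * μ (⋃ n, Bset Z h n)
      ≤ ∫⁻ ω, sInf {t : ℝ≥0∞ | ∃ m : ℕ, 1 ≤ m ∧ t = m ∧ h ≤ Z m ω} ∂μ := by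
    rw [hUsup, ENNReal.mul_iSup]
    exact iSup_le hlint
  by_cases hU : μ (⋃ n, Bset Z h n) = 1
  · calc ENNReal.ofReal (Real.exp h)
        = ENNReal.ofReal (Real.exp h) * μ (⋃ n, Bset Z h n) := by rw [hU, mul_one]
      _ ≤ _ := hfinal1
  · have hcne : μ ((⋃ n, Bset Z h n)ᶜ) ≠ 0 := by
      rw [measure_compl hUmeas (measure_ne_top μ _), measure_univ]
      intro h0
      exact hU (le_antisymm prob_le_one (tsub_eq_zero_iff_le.mp h0))
    have hTtop : ∀ ω ∈ (⋃ n, Bset Z h n)ᶜ,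
        sInf {t : ℝ≥0∞ | ∃ m : ℕ, 1 ≤ m ∧ t = m ∧ h ≤ Z m ω} = ⊤ := by
      intro ω hω
      have he : {t : ℝ≥0∞ | ∃ m : ℕ, 1 ≤ m ∧ t = m ∧ h ≤ Z m ω} = ∅ := by
        ext t
        simp only [Set.mem_empty_iff_false, iff_false, Set.mem_setOf_eq, not_exists]
        rintro m ⟨hm1, rfl, hmh⟩
        exact hω (Set.mem_iUnion.mpr ⟨m, m, hm1, le_rfl, hmh⟩)
      rw [he]
      exact _root_.sInf_empty
    have htop : ∫⁻ ω, sInf {t : ℝ≥0∞ | ∃ m : ℕ, 1 ≤ m ∧ t = m ∧ h ≤ Z m ω} ∂μ = ⊤ := by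
      have hge : ∫⁻ ω, ((⋃ n, Bset Z h n)ᶜ).indicator (fun _ => (⊤:ℝ≥0∞)) ω ∂μ
          ≤ ∫⁻ ω, sInf {t : ℝ≥0∞ | ∃ m : ℕ, 1 ≤ m ∧ t = m ∧ h ≤ Z m ω} ∂μ := by
        apply lintegral_mono
        intro ω
        by_cases hω : ω ∈ (⋃ n, Bset Z h n)ᶜ
        · rw [Set.indicator_of_mem hω]
          exact ge_of_eq (hTtop ω hω)
        · rw [Set.indicator_of_notMem hω]
          exact zero_le
      rw [lintegral_indicator_const hUmeas.compl, ENNReal.top_mul hcne] at hge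
      exact top_unique hge
    rw [htop]
    exact le_top
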